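/- Let X be a finite set of points in P^{n_1} × ⋯ × P^{n_k} with Hilbert function H_X. Then (i) H_X(i) ≤ H_X(i + e_l) for all i ∈ N^k and all l ∈ {1,...,k}; and (ii) if H_X(i) = H_X(i + e_l) for some l, then H_X(i + e_l) = H_X(i + 2e_l). -/

import Mathlib

open MvPolynomial

namespace MultiProjPoints

/-- The variable set of the multigraded coordinate ring of
`ℙ^{n 0} × ⋯ × ℙ^{n (k-1)}`: variables `x_{i,j}` with `i : Fin k`, `0 ≤ j ≤ n i`. -/
abbrev Var (k : ℕ) (n : Fin k → ℕ) := Σ i : Fin k, Fin (n i + 1)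

/-- The `ℕ^k`-grading weight: `deg x_{i,j} = e_i`. -/
def wt (k : ℕ) (n : Fin k → ℕ) : Var k n → (Fin k → ℕ) := fun v => Pi.single v.1 1

/-- The `i`-th standard basis vector of `ℕ^k`. -/
def e {k : ℕ} (l : Fin k) : Fin k → ℕ := Pi.single l 1

variable (K : Type) [Field K]

/-- The graded piece `R_d` of the `ℕ^k`-graded polynomial ring. -/
noncomputable def piece (k : ℕ) (n : Fin k → ℕ) (d : Fin k → ℕ) :
    Submodule K (MvPolynomial (Var k n) K) :=
  weightedHomogeneousSubmodule K (wt k n) d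

/-- `N(d) = ∏ binom (n i + d i) (d i)`, the dimension of `R_d`. -/
def NN (k : ℕ) (n : Fin k → ℕ) (d : Fin k → ℕ) : ℕ := ∏ i, (n i + d i).choose (d i)

/-- A (representative of a) point of `ℙ^{n 0} × ⋯ × ℙ^{n (k-1)}`. -/
def PointRep (k : ℕ) (n : Fin k → ℕ) := (i : Fin k) → Fin (n i + 1) → K

/-- A valid representative: every coordinate block is nonzero. -/
def IsRep {k : ℕ} {n : Fin k → ℕ} (P : PointRep K k n) : Prop := ∀ i, P i ≠ 0

/-- Two representatives define the same point of multi-projective space. -/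
def ProjEq {k : ℕ} {n : Fin k → ℕ} (P Q : PointRep K k n) : Prop :=
  ∀ i, ∃ c : K, c ≠ 0 ∧ P i = c • Q i

/-- A tuple of representatives giving `s` distinct points. -/
def SPoints {k : ℕ} {n : Fin k → ℕ} {s : ℕ} (P : Fin s → PointRep K k n) : Prop :=
  (∀ a, IsRep K (P a)) ∧ ∀ a b, a ≠ b → ¬ ProjEq K (P a) (P b)

/-- The defining ideal `I_X` of the set of points: all polynomials vanishing on
the multi-cone over the points, i.e. the intersection of the point ideals. -/
noncomputable def idealOfPoints {k : ℕ} {n : Fin k → ℕ} {s : ℕ}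
    (P : Fin s → PointRep K k n) : Ideal (MvPolynomial (Var k n) K) :=
  ⨅ (a : Fin s), ⨅ (c : Fin k → K),
    RingHom.ker (eval (fun v : Var k n => c v.1 * P a v.1 v.2))

/-- The degree-`d` piece `I_d` of an ideal, as a `K`-subspace. -/
noncomputable def idealPiece {k : ℕ} {n : Fin k → ℕ}
    (I : Ideal (MvPolynomial (Var k n) K)) (d : Fin k → ℕ) :
    Submodule K (MvPolynomial (Var k n) K) :=
  (Submodule.restrictScalars K I) ⊓ piece K k n d

/-- The multigraded Hilbert function of `X`:
`H_X(d) = dim (R/I_X)_d = dim R_d - dim (I_X)_d`. -/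
noncomputable def hilbert {k : ℕ} {n : Fin k → ℕ} {s : ℕ}
    (P : Fin s → PointRep K k n) (d : Fin k → ℕ) : ℕ :=
  NN k n d - Module.finrank K (idealPiece K (idealOfPoints K P) d)

/-- Generic position: `s` distinct points whose Hilbert function is maximal. -/
def GenericPosition {k : ℕ} {n : Fin k → ℕ} {s : ℕ} (P : Fin s → PointRep K k n) : Prop :=
  SPoints K P ∧ ∀ d : Fin k → ℕ, hilbert K P d = min (NN k n d) s

/-- `R_{e_l}·V`: the span of all products of a variable of degree `e_l`
with an element of `V`. -/
noncomputable def mulSpan {k : ℕ} {n : Fin k → ℕ} (l : Fin k)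
    (V : Submodule K (MvPolynomial (Var k n) K)) :
    Submodule K (MvPolynomial (Var k n) K) :=
  Submodule.span K {g | ∃ (m : Fin (n l + 1)) (f : MvPolynomial (Var k n) K),
    f ∈ V ∧ g = X (⟨l, m⟩ : Var k n) * f}

/-- `D = min { i ∈ ℕ^k | N(i) > s }` (minimal elements for the componentwise order). -/
def Dset (k : ℕ) (n : Fin k → ℕ) (s : ℕ) : Set (Fin k → ℕ) :=
  {i | s < NN k n i ∧ ∀ j : Fin k → ℕ, s < NN k n j → j ≤ i → j = i}

/-- The irrelevant maximal ideal of `R`, generated by all the variables. -/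
noncomputable def irrelevant (k : ℕ) (n : Fin k → ℕ) : Ideal (MvPolynomial (Var k n) K) :=
  Ideal.span (Set.range (X : Var k n → MvPolynomial (Var k n) K))

lemma weight_apply' {k : ℕ} {n : Fin k → ℕ} (σ : Var k n →₀ ℕ) (i : Fin k) :
    (Finsupp.weight (wt k n) σ) i = ∑ j : Fin (n i + 1), σ ⟨i, j⟩ := by
  classical
  rw [Finsupp.weight_apply, Finsupp.sum_fintype _ _ (fun v => by simp)]
  rw [Finset.sum_apply]
  simp only [wt, Pi.smul_apply, Pi.single_apply, smul_eq_mul, mul_ite, mul_one, mul_zero]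
  rw [← Finset.univ_sigma_univ, Finset.sum_sigma]
  rw [Finset.sum_eq_single i (fun b _ hb => by simp [Ne.symm hb]) (by simp)]
  simp


/-- stars and bars for one block -/
noncomputable def symEquiv (m r : ℕ) : {f : Fin m →₀ ℕ // ∑ j, f j = r} ≃ Sym (Fin m) r :=
  (Equiv.subtypeEquiv Multiset.toFinsupp.toEquiv (fun s => by
    have key : ∑ j, (Multiset.toFinsupp.toEquiv s) j = Multiset.card s := by
      show ∑ j, (Multiset.toFinsupp s) j = _
      simp only [Multiset.toFinsupp_apply]
      exact Multiset.sum_count_eq_card (fun a _ => Finset.mem_univ a)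
    rw [key])).symm

lemma card_T (m r : ℕ) : Nat.card {f : Fin m →₀ ℕ // ∑ j, f j = r} = (m + r - 1).choose r := by
  rw [Nat.card_congr (symEquiv m r), Nat.card_eq_fintype_card,
    Sym.card_sym_eq_multichoose, Nat.multichoose_eq, Fintype.card_fin]

/-- The set of exponent vectors of multidegree `d`. -/
def Sset (k : ℕ) (n : Fin k → ℕ) (d : Fin k → ℕ) : Set (Var k n →₀ ℕ) :=
  {σ | Finsupp.weight (wt k n) σ = d}

instance instFiniteT (m r : ℕ) : Finite {f : Fin m →₀ ℕ // ∑ j, f j = r} :=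
  Finite.of_equiv _ (symEquiv m r).symm

noncomputable def SsetEquiv (k : ℕ) (n : Fin k → ℕ) (d : Fin k → ℕ) :
    (Sset k n d) ≃ Π i : Fin k, {f : Fin (n i + 1) →₀ ℕ // ∑ j, f j = d i} :=
  ((Equiv.subtypeEquiv (Finsupp.sigmaFinsuppEquivPiFinsupp) (fun σ => by
    have key : ∀ i, ∑ j, (Finsupp.sigmaFinsuppEquivPiFinsupp σ i) j = ∑ j, σ ⟨i, j⟩ :=
      fun i => Finset.sum_congr rfl fun j _ => Finsupp.sigmaFinsuppEquivPiFinsupp_apply σ i j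
    constructor
    · intro h i
      rw [key i, ← weight_apply' σ i, h]
    · intro h
      funext i
      rw [weight_apply' σ i, ← key i, h i])).trans
    (Equiv.subtypePiEquivPi (p := fun i (f : Fin (n i + 1) →₀ ℕ) => ∑ j, f j = d i)))

def NN' (k : ℕ) (n : Fin k → ℕ) (d : Fin k → ℕ) : ℕ := ∏ i, (n i + d i).choose (d i)

instance (k : ℕ) (n : Fin k → ℕ) (d : Fin k → ℕ) : Finite (Sset k n d) :=
  Finite.of_equiv _ (SsetEquiv k n d).symm

lemma card_Sset (k : ℕ) (n : Fin k → ℕ) (d : Fin k → ℕ) :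
    Nat.card (Sset k n d) = NN' k n d := by
  rw [Nat.card_congr (SsetEquiv k n d), Nat.card_pi]
  refine Finset.prod_congr rfl fun i _ => ?_
  rw [card_T]
  congr 1
  omega



lemma piece_eq_supported (K : Type) [Field K] (k : ℕ) (n : Fin k → ℕ) (d : Fin k → ℕ) :
    piece K k n d = AddMonoidAlgebra.supported K K (Sset k n d) :=
  MvPolynomial.weightedHomogeneousSubmodule_eq_finsupp_supported K (wt k n) d

noncomputable def pieceEquiv (K : Type) [Field K] (k : ℕ) (n : Fin k → ℕ) (d : Fin k → ℕ) :
    (piece K k n d) ≃ₗ[K] (↥(Sset k n d) → K) :=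
  ((LinearEquiv.ofEq _ _ (piece_eq_supported K k n d)).trans
    (AddMonoidAlgebra.supportedEquivFinsupp (Sset k n d))).trans
    (Finsupp.linearEquivFunOnFinite K K _)

instance (K : Type) [Field K] (k : ℕ) (n : Fin k → ℕ) (d : Fin k → ℕ) :
    FiniteDimensional K (piece K k n d) :=
  Module.Finite.equiv (pieceEquiv K k n d).symm

lemma finrank_piece (K : Type) [Field K] (k : ℕ) (n : Fin k → ℕ) (d : Fin k → ℕ) :
    Module.finrank K (piece K k n d) = NN k n d := by
  haveI : Fintype (Sset k n d) := Fintype.ofFinite _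
  rw [(pieceEquiv K k n d).finrank_eq, Module.finrank_fintype_fun_eq_card,
    ← Nat.card_eq_fintype_card, card_Sset]
  rfl



section Eval

variable {K : Type} [Field K] {k : ℕ} {n : Fin k → ℕ} {s : ℕ}

/-- The evaluation map at the `s` chosen representatives. -/
noncomputable def Ev (P : Fin s → PointRep K k n) :
    MvPolynomial (Var k n) K →ₗ[K] (Fin s → K) :=
  LinearMap.pi fun a => (MvPolynomial.aeval (fun v : Var k n => P a v.1 v.2)).toLinearMap

lemma Ev_apply (P : Fin s → PointRep K k n) (f : MvPolynomial (Var k n) K) (a : Fin s) :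
    Ev P f a = eval (fun v : Var k n => P a v.1 v.2) f := by
  show MvPolynomial.aeval _ f = _
  rw [MvPolynomial.aeval_def, Algebra.algebraMap_self]
  rfl

lemma eval_scaled {d : Fin k → ℕ} {f : MvPolynomial (Var k n) K} (hf : f ∈ piece K k n d)
    (c : Fin k → K) (g : Var k n → K) :
    eval (fun v : Var k n => c v.1 * g v) f = (∏ i, c i ^ d i) * eval g f := by
  rw [MvPolynomial.eval_eq, MvPolynomial.eval_eq, Finset.mul_sum]
  refine Finset.sum_congr rfl fun σ hσ => ?_
  have hw : Finsupp.weight (wt k n) σ = d := hf (MvPolynomial.mem_support_iff.mp hσ)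
  have h1 : ∏ v ∈ σ.support, (c v.1 * g v) ^ σ v
      = (∏ v ∈ σ.support, c v.1 ^ σ v) * ∏ v ∈ σ.support, g v ^ σ v := by
    rw [← Finset.prod_mul_distrib]
    exact Finset.prod_congr rfl (fun v _ => mul_pow _ _ _)
  have h2 : ∏ v ∈ σ.support, c v.1 ^ σ v = ∏ i, c i ^ d i := by
    rw [Finset.prod_subset (Finset.subset_univ σ.support)
      (fun v _ hv => by rw [Finsupp.notMem_support_iff.mp hv, pow_zero])]
    rw [← Finset.univ_sigma_univ, Finset.prod_sigma]
    refine Finset.prod_congr rfl fun i _ => ?_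
    calc ∏ j : Fin (n i + 1), c (⟨i, j⟩ : Var k n).fst ^ σ ⟨i, j⟩
        = ∏ j : Fin (n i + 1), c i ^ σ ⟨i, j⟩ := rfl
      _ = c i ^ ∑ j : Fin (n i + 1), σ ⟨i, j⟩ := by rw [Finset.prod_pow_eq_pow_sum]
      _ = c i ^ d i := by rw [← weight_apply' σ i, hw]
  rw [h1, h2]
  ring

lemma mem_ideal_iff (P : Fin s → PointRep K k n) {d : Fin k → ℕ}
    {f : MvPolynomial (Var k n) K} (hf : f ∈ piece K k n d) :
    f ∈ idealOfPoints K P ↔ ∀ a, Ev P f a = 0 := by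
  simp only [idealOfPoints, Ideal.mem_iInf, RingHom.mem_ker, Ev_apply]
  constructor
  · intro h a
    have h1 := h a 1
    simpa using h1
  · intro h a c
    rw [show (fun v : Var k n => c v.1 * P a v.1 v.2)
        = (fun v : Var k n => c v.1 * (fun w : Var k n => P a w.1 w.2) v) from rfl,
      eval_scaled hf c, h a, mul_zero]

/-- The image of the degree-`d` piece under evaluation. -/
noncomputable def Wd (P : Fin s → PointRep K k n) (d : Fin k → ℕ) : Submodule K (Fin s → K) :=
  Submodule.map (Ev P) (piece K k n d)

lemma hilbert_eq_rank (P : Fin s → PointRep K k n) (d : Fin k → ℕ) :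
    hilbert K P d = Module.finrank K (Wd P d) := by
  classical
  set L := (Ev P).comp (piece K k n d).subtype with hLdef
  have hrange : LinearMap.range L = Wd P d := by
    rw [hLdef, LinearMap.range_comp, Submodule.range_subtype]
    rfl
  have hker : Submodule.map (piece K k n d).subtype (LinearMap.ker L) =
      idealPiece K (idealOfPoints K P) d := by
    ext x
    simp only [Submodule.mem_map, LinearMap.mem_ker, idealPiece, Submodule.mem_inf,
      Submodule.restrictScalars_mem]
    constructor
    · rintro ⟨⟨y, hy⟩, hk, rfl⟩
      exact ⟨(mem_ideal_iff P hy).mpr (fun a => congrFun hk a), hy⟩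
    · rintro ⟨hI, hp⟩
      exact ⟨⟨x, hp⟩, funext fun a => (mem_ideal_iff P hp).mp hI a, rfl⟩
  have h1 : Module.finrank K (idealPiece K (idealOfPoints K P) d)
      = Module.finrank K (LinearMap.ker L) := by
    rw [← hker, Submodule.finrank_map_subtype_eq]
  have h2 := LinearMap.finrank_range_add_finrank_ker L
  rw [finrank_piece] at h2
  rw [hrange] at h2
  show NN k n d - Module.finrank K (idealPiece K (idealOfPoints K P) d) = _
  rw [h1]
  omega

/-- Diagonal scaling on `K^s`. -/
noncomputable def Dg (u : Fin s → K) : (Fin s → K) →ₗ[K] (Fin s → K) where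
  toFun x := fun a => u a * x a
  map_add' x y := by funext a; simp [mul_add]
  map_smul' c x := by funext a; simp; ring

@[simp] lemma Dg_apply (u x : Fin s → K) (a : Fin s) : Dg u x a = u a * x a := rfl

lemma Dg_comp (u v : Fin s → K) : (Dg u).comp (Dg v) = Dg (u * v) := by
  apply LinearMap.ext; intro x; funext a; simp; ring

noncomputable def DgEquiv (u : Fin s → K) (hu : ∀ a, u a ≠ 0) :
    (Fin s → K) ≃ₗ[K] (Fin s → K) :=
  LinearEquiv.ofLinear (Dg u) (Dg (fun a => (u a)⁻¹))
    (by apply LinearMap.ext; intro x; funext a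
        show u a * ((u a)⁻¹ * x a) = x a
        rw [← mul_assoc, mul_inv_cancel₀ (hu a), one_mul])
    (by apply LinearMap.ext; intro x; funext a
        show (u a)⁻¹ * (u a * x a) = x a
        rw [← mul_assoc, inv_mul_cancel₀ (hu a), one_mul])

lemma finrank_map_Dg (u : Fin s → K) (hu : ∀ a, u a ≠ 0) (p : Submodule K (Fin s → K)) :
    Module.finrank K (Submodule.map (Dg u) p) = Module.finrank K p :=
  (DgEquiv u hu).finrank_map_eq p

lemma X_mul_mem_piece {d : Fin k → ℕ} (l : Fin k) (m : Fin (n l + 1))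
    {f : MvPolynomial (Var k n) K} (hf : f ∈ piece K k n d) :
    (X (⟨l, m⟩ : Var k n) : MvPolynomial (Var k n) K) * f ∈ piece K k n (d + e l) := by
  have hf' : f.IsWeightedHomogeneous (wt k n) d := hf
  have h := (MvPolynomial.isWeightedHomogeneous_X K (wt k n) ⟨l, m⟩).mul hf'
  have he : wt k n ⟨l, m⟩ + d = d + e l := by rw [add_comm]; rfl
  rw [he] at h
  exact h

/-- A linear form in the `l`-th block of variables. -/
noncomputable def Lc (l : Fin k) (c : Fin (n l + 1) → K) : MvPolynomial (Var k n) K :=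
  ∑ m, c m • X ⟨l, m⟩

lemma Lc_mem (l : Fin k) (c : Fin (n l + 1) → K) : Lc l c ∈ piece K k n (e l) :=
  Submodule.sum_mem _ fun m _ => Submodule.smul_mem _ _
    (MvPolynomial.isWeightedHomogeneous_X K (wt k n) ⟨l, m⟩)

lemma Lc_mul_mem {d : Fin k → ℕ} (l : Fin k) (c : Fin (n l + 1) → K)
    {f : MvPolynomial (Var k n) K} (hf : f ∈ piece K k n d) :
    Lc l c * f ∈ piece K k n (d + e l) := by
  have h := (MvPolynomial.IsWeightedHomogeneous.mul (Lc_mem l c) (hf : f.IsWeightedHomogeneous (wt k n) d))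
  have he : e l + d = d + e l := add_comm _ _
  rw [he] at h
  exact h

lemma eval_Lc (l : Fin k) (c : Fin (n l + 1) → K) (g : Var k n → K) :
    eval g (Lc l c) = ∑ m, c m * g ⟨l, m⟩ := by
  simp [Lc, MvPolynomial.smul_eq_C_mul]

lemma Ev_mul_Lc (P : Fin s → PointRep K k n) (l : Fin k) (c : Fin (n l + 1) → K)
    (f : MvPolynomial (Var k n) K) :
    Ev P (Lc l c * f) = Dg (fun a => ∑ m, c m * P a l m) (Ev P f) := by
  funext a
  rw [Ev_apply, map_mul, eval_Lc, Dg_apply, Ev_apply]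

lemma Ev_mul_X (P : Fin s → PointRep K k n) (l : Fin k) (m : Fin (n l + 1))
    (f : MvPolynomial (Var k n) K) :
    Ev P (X (⟨l, m⟩ : Var k n) * f) = Dg (fun a => P a l m) (Ev P f) := by
  funext a
  rw [Ev_apply, map_mul, MvPolynomial.eval_X, Dg_apply, Ev_apply]

lemma map_Dc_le (P : Fin s → PointRep K k n) (d : Fin k → ℕ) (l : Fin k)
    (c : Fin (n l + 1) → K) :
    Submodule.map (Dg (fun a => ∑ m, c m * P a l m)) (Wd P d) ≤ Wd P (d + e l) := by
  rintro x ⟨y, ⟨f, hf, rfl⟩, rfl⟩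
  exact ⟨Lc l c * f, Lc_mul_mem l c hf, (Ev_mul_Lc P l c f)⟩

lemma map_Dm_le (P : Fin s → PointRep K k n) (d : Fin k → ℕ) (l : Fin k)
    (m : Fin (n l + 1)) :
    Submodule.map (Dg (fun a => P a l m)) (Wd P d) ≤ Wd P (d + e l) := by
  rintro x ⟨y, ⟨f, hf, rfl⟩, rfl⟩
  exact ⟨(X (⟨l, m⟩ : Var k n) : MvPolynomial (Var k n) K) * f,
    X_mul_mem_piece l m hf, (Ev_mul_X P l m f)⟩

lemma piece_le_span (d : Fin k → ℕ) (l : Fin k) :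
    piece K k n (d + e l) ≤ Submodule.span K {g : MvPolynomial (Var k n) K |
      ∃ (m : Fin (n l + 1)) (f : MvPolynomial (Var k n) K),
        f ∈ piece K k n d ∧ g = X (⟨l, m⟩ : Var k n) * f} := by
  classical
  intro f hf
  rw [f.as_sum]
  refine Submodule.sum_mem _ fun σ hσ => ?_
  have hw : Finsupp.weight (wt k n) σ = d + e l := hf (MvPolynomial.mem_support_iff.mp hσ)
  have hl : ∑ j, σ ⟨l, j⟩ = d l + 1 := by
    rw [← weight_apply', hw]
    simp [e, Pi.single_apply]
  have hex : ∃ j, σ ⟨l, j⟩ ≠ 0 := by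
    by_contra hcon
    push_neg at hcon
    simp only [hcon, Finset.sum_const_zero] at hl
    omega
  obtain ⟨j, hj⟩ := hex
  set τ := σ - Finsupp.single (⟨l, j⟩ : Var k n) 1 with hτdef
  have hστ : σ = Finsupp.single (⟨l, j⟩ : Var k n) 1 + τ := by
    rw [hτdef]
    ext v
    simp only [Finsupp.add_apply, Finsupp.tsub_apply, Finsupp.single_apply]
    by_cases hv : (⟨l, j⟩ : Var k n) = v
    · subst hv; simp; omega
    · simp [hv]
  have hτd : Finsupp.weight (wt k n) τ = d := by
    have h2 := hw
    rw [hστ, map_add] at h2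
    have hsing : Finsupp.weight (wt k n) (Finsupp.single (⟨l, j⟩ : Var k n) 1) = e l := by
      rw [Finsupp.weight_apply, Finsupp.sum_single_index (by simp)]
      simp [wt, e]
    rw [hsing] at h2
    have h3 : e l + Finsupp.weight (wt k n) τ = e l + d := by rw [h2, add_comm]
    exact add_left_cancel h3
  have hmono : (MvPolynomial.monomial σ) (MvPolynomial.coeff σ f)
      = X (⟨l, j⟩ : Var k n) * (MvPolynomial.monomial τ) (MvPolynomial.coeff σ f) := by
    rw [MvPolynomial.X, MvPolynomial.monomial_mul, one_mul, ← hστ]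
  rw [hmono]
  exact Submodule.subset_span ⟨j, (MvPolynomial.monomial τ) (MvPolynomial.coeff σ f),
    MvPolynomial.isWeightedHomogeneous_monomial _ _ _ hτd, rfl⟩

lemma Wd_le_iSup (P : Fin s → PointRep K k n) (d : Fin k → ℕ) (l : Fin k) :
    Wd P (d + e l) ≤ ⨆ m : Fin (n l + 1),
      Submodule.map (Dg (fun a => P a l m)) (Wd P d) := by
  rintro x ⟨f, hf, rfl⟩
  have h1 := piece_le_span (K := K) d l hf
  have h2 : Ev P f ∈ Submodule.map (Ev P)
      (Submodule.span K {g : MvPolynomial (Var k n) K |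
        ∃ (m : Fin (n l + 1)) (f0 : MvPolynomial (Var k n) K), f0 ∈ piece K k n d
          ∧ g = X (⟨l, m⟩ : Var k n) * f0}) := ⟨f, h1, rfl⟩
  rw [Submodule.map_span] at h2
  refine Submodule.span_le.mpr ?_ h2
  rintro y ⟨g, ⟨m, f0, hf0, rfl⟩, rfl⟩
  exact Submodule.mem_iSup_of_mem m ⟨Ev P f0, ⟨f0, hf0, rfl⟩, (Ev_mul_X P l m f0).symm⟩

lemma exists_good_c [Infinite K] (P : Fin s → PointRep K k n) (hP : SPoints K P) (l : Fin k) :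
    ∃ c : Fin (n l + 1) → K, ∀ a, (∑ m, c m * P a l m) ≠ 0 := by
  classical
  set q : MvPolynomial (Fin (n l + 1)) K
    := ∏ a, (∑ m, MvPolynomial.C (P a l m) * MvPolynomial.X m) with hqdef
  have hq : q ≠ 0 := by
    rw [hqdef]
    apply Finset.prod_ne_zero_iff.mpr
    intro a _ h0
    obtain ⟨m0, hm0⟩ : ∃ m0, P a l m0 ≠ 0 := by
      by_contra hcon
      push_neg at hcon
      exact (hP.1 a l) (funext hcon)
    have h1 := congrArg (MvPolynomial.eval (Pi.single m0 1)) h0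
    simp [Pi.single_apply, Finset.sum_ite_eq] at h1
    exact hm0 h1
  have h2 : ¬ ∀ x : Fin (n l + 1) → K, MvPolynomial.eval x q = MvPolynomial.eval x 0 :=
    fun h => hq (MvPolynomial.funext h)
  push_neg at h2
  obtain ⟨x, hx⟩ := h2
  rw [map_zero] at hx
  refine ⟨x, fun a h0 => hx ?_⟩
  rw [hqdef]
  rw [map_prod]
  apply Finset.prod_eq_zero (Finset.mem_univ a)
  rw [← h0]
  simp only [map_sum, map_mul, MvPolynomial.eval_C, MvPolynomial.eval_X]
  exact Finset.sum_congr rfl fun m _ => mul_comm _ _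

end Eval


theorem hilbert_growth (K : Type) [Field K] [IsAlgClosed K] [CharZero K]
    (k : ℕ) (n : Fin k → ℕ) {s : ℕ} (P : Fin s → PointRep K k n) (hP : SPoints K P) :
    (∀ (i : Fin k → ℕ) (l : Fin k), hilbert K P i ≤ hilbert K P (i + e l)) ∧
    (∀ (i : Fin k → ℕ) (l : Fin k), hilbert K P i = hilbert K P (i + e l) →
        hilbert K P (i + e l) = hilbert K P (i + e l + e l)) := by
  classical
  haveI : Infinite K := inferInstance
  constructor
  · intro i l
    obtain ⟨c, hc⟩ := exists_good_c P hP l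
    rw [hilbert_eq_rank, hilbert_eq_rank]
    rw [← finrank_map_Dg (fun a => ∑ m, c m * P a l m) hc (Wd P i)]
    exact Submodule.finrank_mono (map_Dc_le P i l c)
  · intro i l h
    obtain ⟨c, hc⟩ := exists_good_c P hP l
    set u : Fin s → K := fun a => ∑ m, c m * P a l m with hu
    rw [hilbert_eq_rank, hilbert_eq_rank] at h
    rw [hilbert_eq_rank, hilbert_eq_rank]
    have h1 : Submodule.map (Dg u) (Wd P i) = Wd P (i + e l) :=
      Submodule.eq_of_le_of_finrank_eq (map_Dc_le P i l c)
        (by rw [finrank_map_Dg u hc, h])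
    have h2 : Wd P (i + e l + e l) = Submodule.map (Dg u) (Wd P (i + e l)) := by
      apply le_antisymm
      · refine le_trans (Wd_le_iSup P (i + e l) l) (iSup_le fun m => ?_)
        calc Submodule.map (Dg fun a => P a l m) (Wd P (i + e l))
            = Submodule.map (Dg fun a => P a l m) (Submodule.map (Dg u) (Wd P i)) := by
              rw [h1]
          _ = Submodule.map (Dg u) (Submodule.map (Dg fun a => P a l m) (Wd P i)) := by
              rw [← Submodule.map_comp, ← Submodule.map_comp, Dg_comp, Dg_comp,
                mul_comm (fun a => P a l m) u]
          _ ≤ Submodule.map (Dg u) (Wd P (i + e l)) :=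
              Submodule.map_mono (map_Dm_le P i l m)
      · exact map_Dc_le P (i + e l) l c
    rw [h2, finrank_map_Dg u hc]

end MultiProjPoints
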